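/- Let f : ℝⁿ → ℝ be continuously differentiable with ∇f bounded and Lipschitz. For x, y ∈ ℝⁿ and t > 0, let U_t(x,y) denote the set of Lipschitz paths γ : [0,t] → ℝⁿ with γ(0) = x and γ(t) = y, and define d_A(x,y) := (1/2) · inf{ ∫₀^1 |∇f(γ(s))| · |γ'(s)| ds : γ ∈ U_1(x,y) } and ρ(x,y,t) := (1/4) · inf{ ∫₀^t (|γ'(s)|² + |∇f(γ(s))|²) ds : γ ∈ U_t(x,y) }. Then d_A(x,y) = inf_{t>0} ρ(x,y,t) for all x, y ∈ ℝⁿ. If moreover ∇f(y) = 0, then t ↦ ρ(x,y,t) is nonincreasing on (0,∞), and consequently d_A(x,y) = lim_{t→+∞} ρ(x,y,t). -/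

import Mathlib

open MeasureTheory

namespace Stmt6Aux

open MeasureTheory Set Filter intervalIntegral

set_option linter.unusedSectionVars false

variable {E : Type*} [NormedAddCommGroup E] [InnerProductSpace ℝ E] [FiniteDimensional ℝ E]

/-- FTC for a Lipschitz function `ℝ → ℝ`: endpoint limit piece. -/
lemma endpoint_limit {g : ℝ → ℝ} {K : NNReal} (hg : LipschitzWith K g) (c : ℝ) :
    Tendsto (fun n : ℕ => ((n : ℝ) + 1) * ∫ s in c..(c + ((n : ℝ) + 1)⁻¹), g s)
      atTop (nhds (g c)) := by
  have hgc : Continuous g := hg.continuous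
  have key : ∀ n : ℕ, ‖(((n : ℝ) + 1) * ∫ s in c..(c + ((n : ℝ) + 1)⁻¹), g s) - g c‖
      ≤ K * ((n : ℝ) + 1)⁻¹ := by
    intro n
    set N : ℝ := (n : ℝ) + 1 with hN
    have hNpos : 0 < N := by positivity
    have hinv : 0 < N⁻¹ := by positivity
    have h1 : (∫ s in c..(c + N⁻¹), g s) - N⁻¹ * g c = ∫ s in c..(c + N⁻¹), (g s - g c) := by
      rw [intervalIntegral.integral_sub (hgc.intervalIntegrable _ _) intervalIntegrable_const]
      simp [mul_comm]
    have h2 : ‖∫ s in c..(c + N⁻¹), (g s - g c)‖ ≤ ((K : ℝ) * N⁻¹) * |c + N⁻¹ - c| := by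
      apply intervalIntegral.norm_integral_le_of_norm_le_const
      intro s hs
      rw [Set.uIoc_of_le (by linarith)] at hs
      have hb : ‖g s - g c‖ ≤ K * ‖s - c‖ := hg.norm_sub_le s c
      have hsc : |s - c| ≤ N⁻¹ := by
        rw [abs_le]; constructor
        · linarith [hs.1]
        · linarith [hs.2]
      calc ‖g s - g c‖ ≤ K * ‖s - c‖ := hb
      _ = K * |s - c| := by rw [Real.norm_eq_abs]
      _ ≤ K * N⁻¹ := by nlinarith [K.coe_nonneg]
    have h3 : |c + N⁻¹ - c| = N⁻¹ := by
      rw [add_sub_cancel_left, abs_of_pos hinv]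
    have : ‖(∫ s in c..(c + N⁻¹), g s) - N⁻¹ * g c‖ ≤ (K : ℝ) * N⁻¹ * N⁻¹ := by
      rw [h1]; rw [h3] at h2; exact h2
    calc ‖(N * ∫ s in c..(c + N⁻¹), g s) - g c‖
        = N * ‖(∫ s in c..(c + N⁻¹), g s) - N⁻¹ * g c‖ := by
          have heq : (N * ∫ s in c..(c + N⁻¹), g s) - g c
              = N * ((∫ s in c..(c + N⁻¹), g s) - N⁻¹ * g c) := by
            field_simp
          rw [heq, norm_mul, Real.norm_eq_abs N, abs_of_pos hNpos]
    _ ≤ N * ((K : ℝ) * N⁻¹ * N⁻¹) := by nlinarith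
    _ = K * N⁻¹ := by field_simp
  have hb : Tendsto (fun n : ℕ => (K : ℝ) * ((n : ℝ) + 1)⁻¹) atTop (nhds 0) := by
    have : Tendsto (fun n : ℕ => ((n : ℝ) + 1)⁻¹) atTop (nhds 0) := by
      simpa [one_div] using (tendsto_one_div_add_atTop_nhds_zero_nat : Tendsto (fun n : ℕ => 1 / ((n : ℝ) + 1)) atTop (nhds 0))
    simpa using this.const_mul (K : ℝ)
  have := squeeze_zero_norm key hb
  have h2 := this.add_const (g c)
  simpa using h2

/-- FTC for Lipschitz functions `ℝ → ℝ`. -/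
lemma lipschitz_integral_deriv_real {g : ℝ → ℝ} {K : NNReal} (hg : LipschitzWith K g)
    {a b : ℝ} (hab : a ≤ b) : ∫ s in a..b, deriv g s = g b - g a := by
  have hgc : Continuous g := hg.continuous
  set F : ℕ → ℝ → ℝ := fun n s => ((n : ℝ) + 1) * (g (s + ((n : ℝ) + 1)⁻¹) - g s) with hF
  -- Step A: value of ∫ F n
  have stepA : ∀ n : ℕ, ∫ s in a..b, F n s
      = ((n : ℝ) + 1) * ((∫ s in b..(b + ((n : ℝ) + 1)⁻¹), g s)
        - ∫ s in a..(a + ((n : ℝ) + 1)⁻¹), g s) := by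
    intro n
    set h : ℝ := ((n : ℝ) + 1)⁻¹ with hh
    have hint : ∀ c d : ℝ, IntervalIntegrable g volume c d := fun c d => hgc.intervalIntegrable c d
    have hshift : (∫ s in a..b, g (s + h)) = ∫ s in (a + h)..(b + h), g s :=
      intervalIntegral.integral_comp_add_right g h
    have e1 : ∫ s in a..b, F n s = ((n:ℝ)+1) * ((∫ s in a..b, g (s + h)) - ∫ s in a..b, g s) := by
      have hint2 : IntervalIntegrable (fun s => g (s + h)) volume a b :=
        (Continuous.intervalIntegrable (by continuity) a b)
      rw [← intervalIntegral.integral_sub hint2 (hint a b),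
        ← intervalIntegral.integral_const_mul]
    have e2 : (∫ s in (a+h)..(b+h), g s) - (∫ s in a..b, g s)
        = (∫ s in b..(b+h), g s) - ∫ s in a..(a+h), g s := by
      have c1 : (∫ s in a..(a+h), g s) + (∫ s in (a+h)..(b+h), g s) = ∫ s in a..(b+h), g s :=
        intervalIntegral.integral_add_adjacent_intervals (hint _ _) (hint _ _)
      have c2 : (∫ s in a..b, g s) + (∫ s in b..(b+h), g s) = ∫ s in a..(b+h), g s :=
        intervalIntegral.integral_add_adjacent_intervals (hint _ _) (hint _ _)
      linarith
    rw [e1, hshift, e2]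
  -- Step B: limit of RHS
  have stepB : Tendsto (fun n : ℕ => ∫ s in a..b, F n s) atTop (nhds (g b - g a)) := by
    have hB := endpoint_limit hg b
    have hA := endpoint_limit hg a
    have := hB.sub hA
    refine Tendsto.congr (fun n => ?_) this
    rw [stepA n]; ring
  -- Step C: dominated convergence
  have stepC : Tendsto (fun n : ℕ => ∫ s in a..b, F n s) atTop
      (nhds (∫ s in a..b, deriv g s)) := by
    rw [intervalIntegral.integral_of_le hab]
    have : ∀ n : ℕ, (∫ s in a..b, F n s) = ∫ s in Set.Ioc a b, F n s := fun n =>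
      intervalIntegral.integral_of_le hab
    simp only [this]
    apply MeasureTheory.tendsto_integral_of_dominated_convergence (bound := fun _ => (K : ℝ))
    · intro n
      have : Continuous (F n) := by
        rw [hF]; continuity
      exact this.aestronglyMeasurable.restrict
    · exact integrable_const _
    · intro n
      refine Eventually.of_forall fun s => ?_
      have : ‖g (s + ((n : ℝ) + 1)⁻¹) - g s‖ ≤ (K : ℝ) * ‖s + ((n : ℝ) + 1)⁻¹ - s‖ :=
        hg.norm_sub_le _ _
      have hNpos : (0:ℝ) < ((n : ℝ) + 1)⁻¹ := by positivity
      rw [hF]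
      simp only [Real.norm_eq_abs] at this ⊢
      rw [abs_mul, abs_of_pos (by positivity : (0:ℝ) < (n:ℝ)+1)]
      have habs : |s + ((n : ℝ) + 1)⁻¹ - s| = ((n : ℝ) + 1)⁻¹ := by
        rw [add_sub_cancel_left, abs_of_pos hNpos]
      rw [habs] at this
      calc ((n:ℝ)+1) * |g (s + ((n : ℝ) + 1)⁻¹) - g s| ≤ ((n:ℝ)+1) * ((K:ℝ) * ((n:ℝ)+1)⁻¹) := by
            nlinarith
      _ = (K : ℝ) := by field_simp
    · have hae : ∀ᵐ s : ℝ, DifferentiableAt ℝ g s := hg.ae_differentiableAt_real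
      refine (MeasureTheory.ae_restrict_of_ae ?_)
      filter_upwards [hae] with s hs
      have hd := hs.hasDerivAt
      rw [hasDerivAt_iff_tendsto_slope] at hd
      have hseq : Tendsto (fun n : ℕ => s + ((n : ℝ) + 1)⁻¹) atTop (nhdsWithin s ({s}ᶜ : Set ℝ)) := by
        apply tendsto_nhdsWithin_of_tendsto_nhds_of_eventually_within
        · have : Tendsto (fun n : ℕ => ((n : ℝ) + 1)⁻¹) atTop (nhds 0) := by
            simpa [one_div] using (tendsto_one_div_add_atTop_nhds_zero_nat : Tendsto (fun n : ℕ => 1 / ((n : ℝ) + 1)) atTop (nhds 0))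
          simpa using (tendsto_const_nhds (x := s)).add this
        · refine Eventually.of_forall fun n => ?_
          simp only [Set.mem_compl_iff, Set.mem_singleton_iff]
          have : (0:ℝ) < ((n : ℝ) + 1)⁻¹ := by positivity
          intro hcontra
          nlinarith [congrArg (fun z => z - s) hcontra]
      have := hd.comp hseq
      refine Tendsto.congr (fun n => ?_) this
      simp only [Function.comp_apply, slope_def_field, hF]
      rw [div_eq_inv_mul]
      have : s + ((n : ℝ) + 1)⁻¹ - s = ((n : ℝ) + 1)⁻¹ := add_sub_cancel_left s _
      rw [this, inv_inv]
  exact tendsto_nhds_unique stepC stepB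


lemma norm_deriv_le_lip {γ : ℝ → E} {K : NNReal} (h : LipschitzWith K γ) (s : ℝ) :
    ‖deriv γ s‖ ≤ K := by
  have h1 : ‖fderiv ℝ γ s‖ ≤ K := norm_fderiv_le_of_lipschitz ℝ h
  calc ‖deriv γ s‖ = ‖(fderiv ℝ γ s) 1‖ := by rw [fderiv_apply_one_eq_deriv]
  _ ≤ ‖fderiv ℝ γ s‖ * ‖(1:ℝ)‖ := (fderiv ℝ γ s).le_opNorm 1
  _ ≤ K := by simpa using h1

lemma intervalIntegrable_of_bound {g : ℝ → ℝ} (hm : AEStronglyMeasurable g volume)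
    (M : ℝ) (hM : ∀ s, |g s| ≤ M) (a b : ℝ) : IntervalIntegrable g volume a b := by
  constructor <;>
  · refine Integrable.mono' (g := fun _ => M) (integrable_const M) hm.restrict ?_
    exact Eventually.of_forall fun s => by simpa [Real.norm_eq_abs] using hM s

lemma intervalIntegrable_of_bound_vec {γ : ℝ → E} (hm : AEStronglyMeasurable γ volume)
    (M : ℝ) (hM : ∀ s, ‖γ s‖ ≤ M) (a b : ℝ) : IntervalIntegrable γ volume a b := by
  constructor <;>
  · refine Integrable.mono' (g := fun _ => M) (integrable_const M) hm.restrict ?_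
    exact Eventually.of_forall fun s => hM s

lemma intervalIntegrable_deriv_lip {γ : ℝ → E} {K : NNReal} (h : LipschitzWith K γ) (a b : ℝ) :
    IntervalIntegrable (deriv γ) volume a b :=
  intervalIntegrable_of_bound_vec (stronglyMeasurable_deriv γ).aestronglyMeasurable
    K (norm_deriv_le_lip h) a b

/-- FTC for Lipschitz curves into a finite-dimensional inner product space. -/
lemma lipschitz_integral_deriv {γ : ℝ → E} {K : NNReal} (h : LipschitzWith K γ)
    {a b : ℝ} (hab : a ≤ b) : ∫ s in a..b, deriv γ s = γ b - γ a := by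
  apply ext_inner_left ℝ
  intro v
  set L : E →L[ℝ] ℝ := innerSL ℝ v with hL
  have hcomm : (∫ s in a..b, L (deriv γ s)) = L (∫ s in a..b, deriv γ s) :=
    L.intervalIntegral_comp_comm (intervalIntegrable_deriv_lip h a b)
  have hLlip : LipschitzWith (‖L‖₊ * K) (fun s => L (γ s)) := L.lipschitz.comp h
  have hcong : (∫ s in a..b, L (deriv γ s)) = ∫ s in a..b, deriv (fun u => L (γ u)) s := by
    apply intervalIntegral.integral_congr_ae
    filter_upwards [h.ae_differentiableAt_real] with s hs _
    exact ((L.hasFDerivAt.comp_hasDerivAt s hs.hasDerivAt).deriv).symm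
  have hsc : (∫ s in a..b, deriv (fun u => L (γ u)) s) = L (γ b) - L (γ a) :=
    lipschitz_integral_deriv_real hLlip hab
  have : L (∫ s in a..b, deriv γ s) = L (γ b - γ a) := by
    rw [← hcomm, hcong, hsc, L.map_sub]
  simpa [hL] using this

lemma norm_sub_le_integral_norm_deriv {γ : ℝ → E} {K : NNReal} (h : LipschitzWith K γ)
    {a b : ℝ} (hab : a ≤ b) : ‖γ b - γ a‖ ≤ ∫ s in a..b, ‖deriv γ s‖ := by
  rw [← lipschitz_integral_deriv h hab]
  exact intervalIntegral.norm_integral_le_integral_norm hab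

lemma lipschitzWith_const_mul (t : ℝ) : LipschitzWith ‖t‖₊ (fun u : ℝ => t * u) := by
  intro a b
  simp only [edist_dist, Real.dist_eq]
  rw [← mul_sub, abs_mul]
  rw [← ENNReal.ofReal_coe_nnreal]
  rw [← ENNReal.ofReal_mul (by positivity)]
  apply ENNReal.ofReal_le_ofReal
  simp [Real.norm_eq_abs]

lemma lipschitzWith_line (p : E) (w : E) : LipschitzWith ‖w‖₊ (fun τ : ℝ => p + τ • w) := by
  intro a b
  simp only [edist_dist, dist_eq_norm]
  have : p + a • w - (p + b • w) = (a - b) • w := by module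
  rw [this, norm_smul]
  rw [← ENNReal.ofReal_coe_nnreal]
  rw [← ENNReal.ofReal_mul (by positivity)]
  apply ENNReal.ofReal_le_ofReal
  rw [coe_nnnorm, mul_comm]

lemma hasDerivAt_line (p : E) (w : E) (τ : ℝ) : HasDerivAt (fun τ : ℝ => p + τ • w) w τ := by
  simpa using ((hasDerivAt_id τ).smul_const w).const_add p

lemma deriv_line (p : E) (w : E) (τ : ℝ) : deriv (fun τ : ℝ => p + τ • w) τ = w :=
  (hasDerivAt_line p w τ).deriv

lemma deriv_comp_const_mul' {γ : ℝ → E} {t : ℝ} (ht : t ≠ 0) (s : ℝ) :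
    deriv (fun u => γ (t * u)) s = t • deriv γ (t * s) := by
  by_cases hd : DifferentiableAt ℝ γ (t * s)
  · have h1 : HasDerivAt (fun u : ℝ => t * u) t s := by
      simpa using (hasDerivAt_id s).const_mul t
    have := HasDerivAt.scomp (x := s) hd.hasDerivAt h1
    exact this.deriv
  · have hnd : ¬ DifferentiableAt ℝ (fun u => γ (t * u)) s := by
      intro hc
      apply hd
      have h2 : DifferentiableAt ℝ (fun u : ℝ => t⁻¹ * u) (t * s) :=
        (differentiableAt_id.const_mul t⁻¹)
      have h3 : t⁻¹ * (t * s) = s := by field_simp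
      have h4 : DifferentiableAt ℝ ((fun u => γ (t * u)) ∘ (fun u : ℝ => t⁻¹ * u)) (t * s) := by
        apply DifferentiableAt.comp
        · rw [h3]; exact hc
        · exact h2
      have h5 : ((fun u => γ (t * u)) ∘ (fun u : ℝ => t⁻¹ * u)) = γ := by
        funext u
        simp only [Function.comp_apply]
        rw [← mul_assoc, mul_inv_cancel₀ ht, one_mul]
      rwa [h5] at h4
    rw [deriv_zero_of_not_differentiableAt hd, deriv_zero_of_not_differentiableAt hnd, smul_zero]

section WithF
variable {f : E → ℝ} {C : ℝ} (hgc : Continuous (gradient f)) (hC : ∀ z, ‖gradient f z‖ ≤ C)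

include hgc hC

/-- integrability of the action integrand. -/
lemma action_integrable {γ : ℝ → E} {K : NNReal} (h : LipschitzWith K γ) (a b : ℝ) :
    IntervalIntegrable (fun s => ‖deriv γ s‖^2 + ‖gradient f (γ s)‖^2) volume a b := by
  refine intervalIntegrable_of_bound ?_ ((K:ℝ)^2 + C^2) ?_ a b
  · have m1 : AEStronglyMeasurable (fun s => ‖deriv γ s‖^2) volume := by
      exact ((stronglyMeasurable_deriv γ).norm.pow 2).aestronglyMeasurable
    have m2 : AEStronglyMeasurable (fun s => ‖gradient f (γ s)‖^2) volume := by
      exact (((hgc.comp h.continuous).norm.pow 2)).aestronglyMeasurable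
    exact m1.add m2
  · intro s
    have h1 : ‖deriv γ s‖^2 ≤ (K:ℝ)^2 := by
      have := norm_deriv_le_lip h s
      nlinarith [norm_nonneg (deriv γ s)]
    have h2 : ‖gradient f (γ s)‖^2 ≤ C^2 := by
      have := hC (γ s)
      nlinarith [norm_nonneg (gradient f (γ s))]
    rw [abs_of_nonneg (by positivity)]
    linarith

/-- integrability of the Agmon integrand. -/
lemma agmon_integrable {γ : ℝ → E} {K : NNReal} (h : LipschitzWith K γ) (a b : ℝ) :
    IntervalIntegrable (fun s => ‖gradient f (γ s)‖ * ‖deriv γ s‖) volume a b := by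
  refine intervalIntegrable_of_bound ?_ (C * K) ?_ a b
  · exact ((hgc.comp h.continuous).norm.aestronglyMeasurable.mul
      (stronglyMeasurable_deriv γ).norm.aestronglyMeasurable)
  · intro s
    have h1 := norm_deriv_le_lip h s
    have h2 := hC (γ s)
    have h3 := norm_nonneg (deriv γ s)
    have h4 := norm_nonneg (gradient f (γ s))
    rw [abs_of_nonneg (by positivity)]
    nlinarith

/-- Direction A : rescaling a path on `[0,t]` to `[0,1]`. -/
lemma dirA_exists {t : ℝ} (ht : 0 < t) {γ : ℝ → E} {K : NNReal} (hγ : LipschitzWith K γ) :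
    ∃ σ : ℝ → E, (∃ K', LipschitzWith K' σ) ∧ σ 0 = γ 0 ∧ σ 1 = γ t ∧
      2 * (∫ s in (0:ℝ)..1, ‖gradient f (σ s)‖ * ‖deriv σ s‖)
        ≤ ∫ s in (0:ℝ)..t, (‖deriv γ s‖^2 + ‖gradient f (γ s)‖^2) := by
  refine ⟨fun s => γ (t * s), ⟨K * ‖t‖₊, ?_⟩, by simp, by simp, ?_⟩
  · exact hγ.comp (lipschitzWith_const_mul t)
  · have hds : ∀ s, deriv (fun u => γ (t * u)) s = t • deriv γ (t * s) :=
      deriv_comp_const_mul' ht.ne'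
    have e1 : (∫ s in (0:ℝ)..1, ‖gradient f (γ (t * s))‖ * ‖deriv (fun u => γ (t * u)) s‖)
        = ∫ s in (0:ℝ)..1, t * (‖gradient f (γ (t * s))‖ * ‖deriv γ (t * s)‖) := by
      apply intervalIntegral.integral_congr
      intro s _
      dsimp only
      rw [hds s, norm_smul, Real.norm_eq_abs, abs_of_pos ht]
      ring
    have e2 : (∫ s in (0:ℝ)..1, t * (‖gradient f (γ (t * s))‖ * ‖deriv γ (t * s)‖))
        = ∫ s in (0:ℝ)..t, ‖gradient f (γ s)‖ * ‖deriv γ s‖ := by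
      rw [intervalIntegral.integral_const_mul]
      rw [intervalIntegral.integral_comp_mul_left
        (fun u => ‖gradient f (γ u)‖ * ‖deriv γ u‖) ht.ne']
      rw [mul_zero, mul_one, smul_eq_mul, ← mul_assoc, mul_inv_cancel₀ ht.ne', one_mul]
    have e3 : 2 * (∫ s in (0:ℝ)..t, ‖gradient f (γ s)‖ * ‖deriv γ s‖)
        ≤ ∫ s in (0:ℝ)..t, (‖deriv γ s‖^2 + ‖gradient f (γ s)‖^2) := by
      rw [← intervalIntegral.integral_const_mul]
      apply intervalIntegral.integral_mono_on ht.le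
      · exact (agmon_integrable hgc hC hγ 0 t).const_mul 2
      · exact action_integrable hgc hC hγ 0 t
      · intro s _
        have := two_mul_le_add_sq ‖deriv γ s‖ ‖gradient f (γ s)‖
        nlinarith
    calc 2 * (∫ s in (0:ℝ)..1, ‖gradient f (γ (t*s))‖ * ‖deriv (fun u => γ (t * u)) s‖)
        = 2 * ∫ s in (0:ℝ)..t, ‖gradient f (γ s)‖ * ‖deriv γ s‖ := by rw [e1, e2]
    _ ≤ _ := e3
end WithF

lemma lipschitz_glue {γ₁ γ₂ : ℝ → E} {K₁ K₂ : NNReal} (h₁ : LipschitzWith K₁ γ₁)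
    (h₂ : LipschitzWith K₂ γ₂) {t₁ : ℝ} (hjoin : γ₂ 0 = γ₁ t₁) :
    LipschitzWith (max K₁ K₂) (fun τ => if τ ≤ t₁ then γ₁ τ else γ₂ (τ - t₁)) := by
  apply LipschitzWith.of_dist_le_mul
  have hcoe : ((max K₁ K₂ : NNReal) : ℝ) = max (K₁ : ℝ) (K₂ : ℝ) := by
    simp [NNReal.coe_max]
  intro a b
  wlog hab : b ≤ a generalizing a b
  · rw [dist_comm, dist_comm a b]
    exact this b a (le_of_not_ge hab)
  have hdist : dist a b = a - b := by
    rw [Real.dist_eq, abs_of_nonneg (by linarith)]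
  rcases le_or_gt a t₁ with ha | ha
  · rw [if_pos ha, if_pos (hab.trans ha)]
    calc dist (γ₁ a) (γ₁ b) ≤ K₁ * dist a b := h₁.dist_le_mul a b
    _ ≤ max K₁ K₂ * dist a b := by
        rw [hcoe]
        exact mul_le_mul_of_nonneg_right (le_max_left _ _) dist_nonneg
  · rcases le_or_gt b t₁ with hb | hb
    · rw [if_neg (not_le.2 ha), if_pos hb]
      calc dist (γ₂ (a - t₁)) (γ₁ b)
          ≤ dist (γ₂ (a - t₁)) (γ₂ 0) + dist (γ₂ 0) (γ₁ b) := dist_triangle _ _ _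
      _ = dist (γ₂ (a - t₁)) (γ₂ 0) + dist (γ₁ t₁) (γ₁ b) := by rw [hjoin]
      _ ≤ K₂ * dist (a - t₁) 0 + K₁ * dist t₁ b := by
          gcongr
          exacts [h₂.dist_le_mul _ _, h₁.dist_le_mul _ _]
      _ ≤ (max K₁ K₂ : NNReal) * dist (a - t₁) 0 + (max K₁ K₂ : NNReal) * dist t₁ b := by
          have hm1 : (K₂:ℝ) ≤ ((max K₁ K₂ : NNReal):ℝ) := by
            rw [hcoe]; exact le_max_right _ _
          have hm2 : (K₁:ℝ) ≤ ((max K₁ K₂ : NNReal):ℝ) := by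
            rw [hcoe]; exact le_max_left _ _
          exact add_le_add (mul_le_mul_of_nonneg_right hm1 dist_nonneg)
            (mul_le_mul_of_nonneg_right hm2 dist_nonneg)
      _ ≤ (max K₁ K₂ : NNReal) * dist a b := by
          have hd1 : dist (a - t₁) 0 = a - t₁ := by
            rw [Real.dist_eq, sub_zero, abs_of_nonneg (by linarith)]
          have hd2 : dist t₁ b = t₁ - b := by
            rw [Real.dist_eq, abs_of_nonneg (by linarith)]
          rw [hd1, hd2, hdist, ← mul_add]
          apply mul_le_mul_of_nonneg_left (by linarith) (by positivity)
    · rw [if_neg (not_le.2 ha), if_neg (not_le.2 hb)]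
      calc dist (γ₂ (a - t₁)) (γ₂ (b - t₁)) ≤ K₂ * dist (a - t₁) (b - t₁) := h₂.dist_le_mul _ _
      _ = K₂ * dist a b := by
          rw [Real.dist_eq, Real.dist_eq]
          congr 1
          ring
      _ ≤ max K₁ K₂ * dist a b := by
          rw [hcoe]
          exact mul_le_mul_of_nonneg_right (le_max_right _ _) dist_nonneg

/-- achievable cost between two points. -/
def ach (f : E → ℝ) (x y : E) (c : ℝ) : Prop :=
  ∃ t : ℝ, 0 < t ∧ ∃ γ : ℝ → E, (∃ K, LipschitzWith K γ) ∧ γ 0 = x ∧ γ t = y ∧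
    (∫ s in (0:ℝ)..t, (‖deriv γ s‖^2 + ‖gradient f (γ s)‖^2)) ≤ c

section WithF2
variable {f : E → ℝ} {C : ℝ} (hgc : Continuous (gradient f)) (hC : ∀ z, ‖gradient f z‖ ≤ C)
include hgc hC

lemma ach_trans {x z y : E} {c₁ c₂ : ℝ} (h₁ : ach f x z c₁) (h₂ : ach f z y c₂) :
    ach f x y (c₁ + c₂) := by
  obtain ⟨t₁, ht₁, γ₁, ⟨K₁, hK₁⟩, h10, h1t, h1c⟩ := h₁
  obtain ⟨t₂, ht₂, γ₂, ⟨K₂, hK₂⟩, h20, h2t, h2c⟩ := h₂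
  set η : ℝ → E := fun τ => if τ ≤ t₁ then γ₁ τ else γ₂ (τ - t₁) with hη
  have hjoin : γ₂ 0 = γ₁ t₁ := by rw [h20, h1t]
  have hlip : LipschitzWith (max K₁ K₂) η := lipschitz_glue hK₁ hK₂ hjoin
  have hne : ∀ᵐ s : ℝ, s ≠ t₁ := by
    rw [ae_iff]
    have : {s : ℝ | ¬ s ≠ t₁} = {t₁} := by ext s; simp
    rw [this]
    exact measure_singleton t₁
  refine ⟨t₁ + t₂, by linarith, η, ⟨_, hlip⟩, ?_, ?_, ?_⟩
  · show (if (0:ℝ) ≤ t₁ then γ₁ 0 else _) = x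
    rw [if_pos ht₁.le, h10]
  · show (if t₁ + t₂ ≤ t₁ then _ else γ₂ (t₁ + t₂ - t₁)) = y
    rw [if_neg (by linarith), show t₁ + t₂ - t₁ = t₂ by ring, h2t]
  · have hsplit : (∫ s in (0:ℝ)..(t₁+t₂), (‖deriv η s‖^2 + ‖gradient f (η s)‖^2))
        = (∫ s in (0:ℝ)..t₁, (‖deriv η s‖^2 + ‖gradient f (η s)‖^2))
          + ∫ s in t₁..(t₁+t₂), (‖deriv η s‖^2 + ‖gradient f (η s)‖^2) := by
      rw [intervalIntegral.integral_add_adjacent_intervals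
        (action_integrable hgc hC hlip 0 t₁) (action_integrable hgc hC hlip t₁ (t₁+t₂))]
    have he1 : (∫ s in (0:ℝ)..t₁, (‖deriv η s‖^2 + ‖gradient f (η s)‖^2))
        = ∫ s in (0:ℝ)..t₁, (‖deriv γ₁ s‖^2 + ‖gradient f (γ₁ s)‖^2) := by
      apply intervalIntegral.integral_congr_ae
      filter_upwards [hne] with s hs hmem
      rw [Set.uIoc_of_le ht₁.le] at hmem
      have hslt : s < t₁ := lt_of_le_of_ne hmem.2 hs
      have hev : η =ᶠ[nhds s] γ₁ := by
        filter_upwards [Iio_mem_nhds hslt] with u hu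
        exact if_pos (le_of_lt hu)
      rw [hev.deriv_eq, hev.self_of_nhds]
    have he2 : (∫ s in t₁..(t₁+t₂), (‖deriv η s‖^2 + ‖gradient f (η s)‖^2))
        = ∫ s in (0:ℝ)..t₂, (‖deriv γ₂ s‖^2 + ‖gradient f (γ₂ s)‖^2) := by
      have step1 : (∫ s in t₁..(t₁+t₂), (‖deriv η s‖^2 + ‖gradient f (η s)‖^2))
          = ∫ s in t₁..(t₁+t₂),
              (‖deriv γ₂ (s - t₁)‖^2 + ‖gradient f (γ₂ (s - t₁))‖^2) := by
        apply intervalIntegral.integral_congr_ae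
        filter_upwards [hne] with s hs hmem
        rw [Set.uIoc_of_le (by linarith)] at hmem
        have hsgt : t₁ < s := hmem.1
        have hev : η =ᶠ[nhds s] (fun u => γ₂ (u - t₁)) := by
          filter_upwards [Ioi_mem_nhds hsgt] with u hu
          exact if_neg (not_le.2 hu)
        rw [hev.deriv_eq, hev.self_of_nhds, deriv_comp_sub_const]
      rw [step1]
      have := intervalIntegral.integral_comp_sub_right
        (fun s => (‖deriv γ₂ s‖^2 + ‖gradient f (γ₂ s)‖^2)) t₁ (a := t₁) (b := t₁ + t₂)
      rw [this, show t₁ - t₁ = (0:ℝ) by ring, show t₁ + t₂ - t₁ = t₂ by ring]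
    rw [hsplit, he1, he2]
    exact add_le_add h1c h2c

lemma ach_segment {ℓ : NNReal} (hl : LipschitzWith ℓ (gradient f)) (p q : E)
    {δ : ℝ} (hδ : 0 < δ) :
    ach f p q (2 * ‖q - p‖ * (‖gradient f p‖ + ℓ * ‖q - p‖) + δ) := by
  set L : ℝ := ‖q - p‖ with hLdef
  rcases eq_or_lt_of_le (norm_nonneg (q - p)) with hL0 | hLpos
  · -- p = q : constant path
    have hpq : q = p := by
      have : ‖q - p‖ = 0 := hL0.symm
      rw [norm_eq_zero, sub_eq_zero] at this
      exact this
    refine ⟨δ / (‖gradient f p‖^2 + 1), by positivity, fun _ => p,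
      ⟨0, LipschitzWith.const p⟩, rfl, hpq.symm ▸ rfl, ?_⟩
    have hconst : ∀ s : ℝ, deriv (fun _ : ℝ => p) s = 0 := fun s => deriv_const s p
    have hval : (∫ s in (0:ℝ)..(δ / (‖gradient f p‖^2 + 1)),
        (‖deriv (fun _ : ℝ => p) s‖^2 + ‖gradient f p‖^2))
        = (δ / (‖gradient f p‖^2 + 1)) * (0 + ‖gradient f p‖^2) := by
      rw [intervalIntegral.integral_congr (g := fun _ => (0:ℝ) + ‖gradient f p‖^2)
        (fun s _ => by rw [hconst s]; simp)]
      simp [intervalIntegral.integral_const, smul_eq_mul]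
    have target_eq : 2 * L * (‖gradient f p‖ + ℓ * L) + δ = δ := by
      rw [hLdef, ← hL0]; ring
    rw [hval, target_eq]
    have : δ / (‖gradient f p‖^2 + 1) * (0 + ‖gradient f p‖^2) ≤ δ := by
      rw [div_mul_eq_mul_div, div_le_iff₀ (by positivity)]
      nlinarith
    linarith
  · -- genuine segment
    set V : ℝ := ‖gradient f p‖ with hV
    set B : ℝ := V + ℓ * L with hB
    have hLpos' : 0 < L := hLpos
    have hBnn : 0 ≤ B := by positivity
    set v : ℝ := B + δ / (2 * L) with hv
    have hvpos : 0 < v := by positivity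
    set t : ℝ := L / v with ht
    have htpos : 0 < t := by positivity
    set w : E := t⁻¹ • (q - p) with hw
    refine ⟨t, htpos, fun τ => p + τ • w, ⟨‖w‖₊, lipschitzWith_line p w⟩, by simp, ?_, ?_⟩
    · show p + t • (t⁻¹ • (q - p)) = q
      rw [smul_smul, mul_inv_cancel₀ htpos.ne', one_smul]
      abel
    · have hnw : ‖w‖ = v := by
        rw [hw, norm_smul, norm_inv, Real.norm_eq_abs, abs_of_pos htpos, ← hLdef, ht]
        field_simp
      have hbound : ∀ τ ∈ Set.Icc (0:ℝ) t,
          (‖deriv (fun τ : ℝ => p + τ • w) τ‖^2 + ‖gradient f (p + τ • w)‖^2) ≤ v^2 + B^2 := by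
        intro τ hτ
        rw [deriv_line, hnw]
        have h1 : ‖gradient f (p + τ • w)‖ ≤ B := by
          have h2 : ‖gradient f (p + τ • w) - gradient f p‖ ≤ ℓ * ‖τ • w‖ := by
            have := hl.norm_sub_le (p + τ • w) p
            simpa using this
          have h3 : ‖τ • w‖ ≤ L := by
            rw [norm_smul, hnw, Real.norm_eq_abs, abs_of_nonneg hτ.1]
            calc τ * v ≤ t * v := by nlinarith [hτ.2]
            _ = L := by rw [ht]; field_simp
          calc ‖gradient f (p + τ • w)‖ ≤ ‖gradient f p‖ + ‖gradient f (p + τ • w) - gradient f p‖ := by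
                have := norm_sub_norm_le (gradient f (p + τ • w)) (gradient f p)
                linarith [norm_sub_rev (gradient f (p + τ • w)) (gradient f p) ▸ this]
          _ ≤ V + ℓ * L := by
              rw [hV]
              gcongr
              exact h2.trans (by nlinarith [ℓ.coe_nonneg])
          _ = B := hB.symm
        nlinarith [norm_nonneg (gradient f (p + τ • w))]
      have hint : (∫ τ in (0:ℝ)..t, (‖deriv (fun τ : ℝ => p + τ • w) τ‖^2
            + ‖gradient f (p + τ • w)‖^2)) ≤ t * (v^2 + B^2) := by
        have hc : (∫ _ in (0:ℝ)..t, (v^2 + B^2)) = t * (v^2 + B^2) := by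
          simp [intervalIntegral.integral_const, smul_eq_mul]
          ring
        rw [← hc]
        apply intervalIntegral.integral_mono_on htpos.le _ intervalIntegrable_const hbound
        · have := action_integrable hgc hC (lipschitzWith_line p w) 0 t
          exact this
      have harith : t * (v^2 + B^2) ≤ 2 * L * B + δ := by
        have hδL : 0 < δ / (2 * L) := by positivity
        have hBv : B ≤ v := by rw [hv]; linarith
        have htv : t * v = L := by rw [ht]; field_simp
        have hBB : B * B ≤ v * B := mul_le_mul_of_nonneg_right hBv hBnn
        have h1 : t * (v^2 + B^2) ≤ t * v * v + t * v * B := by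
          have h1' := mul_le_mul_of_nonneg_left hBB htpos.le
          nlinarith [h1']
        rw [htv] at h1
        have h2 : L * v = L * B + δ / 2 := by
          rw [hv]; field_simp
        calc t * (v^2 + B^2) ≤ L * v + L * B := h1
        _ = 2 * L * B + δ / 2 := by rw [h2]; ring
        _ ≤ 2 * L * B + δ := by linarith
      calc (∫ τ in (0:ℝ)..t, (‖deriv (fun τ : ℝ => p + τ • w) τ‖^2
            + ‖gradient f (p + τ • w)‖^2)) ≤ t * (v^2 + B^2) := hint
      _ ≤ 2 * L * B + δ := harith
      _ = 2 * ‖q - p‖ * (‖gradient f p‖ + ℓ * ‖q - p‖) + δ := by rw [hB, hV, hLdef]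
end WithF2

section WithF2
variable {f : E → ℝ} {C : ℝ} (hgc : Continuous (gradient f)) (hC : ∀ z, ‖gradient f z‖ ≤ C)
include hgc hC

lemma ach_chain {ℓ : NNReal} (hl : LipschitzWith ℓ (gradient f))
    (γ : ℝ → E) {m : ℕ} (hm : 0 < m) {δ : ℝ} (hδ : 0 < δ) :
    ach f (γ 0) (γ 1) (∑ i ∈ Finset.range m,
      (2 * ‖γ (((i:ℝ)+1)/m) - γ ((i:ℝ)/m)‖ *
        (‖gradient f (γ ((i:ℝ)/m))‖ + ℓ * ‖γ (((i:ℝ)+1)/m) - γ ((i:ℝ)/m)‖) + δ)) := by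
  have key : ∀ j : ℕ, 0 < j → j ≤ m →
      ach f (γ 0) (γ ((j:ℝ)/m)) (∑ i ∈ Finset.range j,
        (2 * ‖γ (((i:ℝ)+1)/m) - γ ((i:ℝ)/m)‖ *
          (‖gradient f (γ ((i:ℝ)/m))‖ + ℓ * ‖γ (((i:ℝ)+1)/m) - γ ((i:ℝ)/m)‖) + δ)) := by
    intro j
    induction j with
    | zero => intro h; exact absurd h (lt_irrefl 0)
    | succ j ih =>
      intro _ hj
      rcases Nat.eq_zero_or_pos j with rfl | hjpos
      · rw [Finset.sum_range_one]
        have hseg := ach_segment hgc hC hl (γ (((0:ℕ):ℝ)/m)) (γ ((((0:ℕ):ℝ)+1)/m)) hδ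
        have h0 : (((0:ℕ):ℝ))/m = 0 := by norm_num
        rw [h0] at hseg
        have h1 : (((0+1:ℕ)):ℝ)/m = ((((0:ℕ):ℝ))+1)/m := by push_cast; ring_nf
        rw [h1, h0]
        exact hseg
      · have h1 := ih hjpos (le_of_lt hj)
        have hseg := ach_segment hgc hC hl (γ ((j:ℝ)/m)) (γ (((j:ℝ)+1)/m)) hδ
        have h2 := ach_trans hgc hC h1 hseg
        rw [Finset.sum_range_succ]
        have hcast : ((j+1:ℕ):ℝ) = (j:ℝ)+1 := by push_cast; ring
        rw [hcast]
        exact h2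
  have hfin := key m hm le_rfl
  rw [show ((m:ℝ)/m) = 1 by field_simp] at hfin
  exact hfin

lemma seg_est {ℓ : NNReal} (hl : LipschitzWith ℓ (gradient f)) {γ : ℝ → E} {K : NNReal}
    (hγ : LipschitzWith K γ) {m : ℕ} (hm : 0 < m) {i : ℕ} :
    ‖γ (((i:ℝ)+1)/m) - γ ((i:ℝ)/m)‖ * ‖gradient f (γ ((i:ℝ)/m))‖
      ≤ (∫ s in ((i:ℝ)/m)..(((i:ℝ)+1)/m), ‖gradient f (γ s)‖ * ‖deriv γ s‖)
        + ℓ * K^2 / m^2 := by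
  have hmpos : (0:ℝ) < m := by exact_mod_cast hm
  have hab : (i:ℝ)/m ≤ ((i:ℝ)+1)/m := by gcongr; linarith
  have hba : ((i:ℝ)+1)/m - (i:ℝ)/m = 1/m := by field_simp; ring
  have hndi : IntervalIntegrable (fun s => ‖deriv γ s‖) volume ((i:ℝ)/m) (((i:ℝ)+1)/m) :=
    intervalIntegrable_of_bound (stronglyMeasurable_deriv γ).norm.aestronglyMeasurable
      K (fun s => by rw [abs_of_nonneg (norm_nonneg _)]; exact norm_deriv_le_lip hγ s) _ _
  have hLi : ‖γ (((i:ℝ)+1)/m) - γ ((i:ℝ)/m)‖ ≤ K * (1/m) := by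
    calc ‖γ (((i:ℝ)+1)/m) - γ ((i:ℝ)/m)‖ = dist (γ (((i:ℝ)+1)/m)) (γ ((i:ℝ)/m)) :=
          (dist_eq_norm _ _).symm
    _ ≤ K * dist (((i:ℝ)+1)/m) ((i:ℝ)/m) := hγ.dist_le_mul _ _
    _ = K * (1/m) := by rw [Real.dist_eq, abs_of_nonneg (by linarith), hba]
  have hVlow : ∀ s ∈ Set.Icc ((i:ℝ)/m) (((i:ℝ)+1)/m),
      ‖gradient f (γ ((i:ℝ)/m))‖ - ℓ * K * (1/m) ≤ ‖gradient f (γ s)‖ := by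
    intro s hs
    have h1 : ‖gradient f (γ ((i:ℝ)/m))‖ - ‖gradient f (γ s)‖
        ≤ ‖gradient f (γ ((i:ℝ)/m)) - gradient f (γ s)‖ := norm_sub_norm_le _ _
    have h2 : ‖gradient f (γ ((i:ℝ)/m)) - gradient f (γ s)‖ ≤ ℓ * ‖γ ((i:ℝ)/m) - γ s‖ := by
      have := hl.dist_le_mul (γ ((i:ℝ)/m)) (γ s)
      rwa [dist_eq_norm, dist_eq_norm] at this
    have h3 : ‖γ ((i:ℝ)/m) - γ s‖ ≤ K * (1/m) := by
      have := hγ.dist_le_mul ((i:ℝ)/m) s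
      rw [dist_eq_norm] at this
      calc ‖γ ((i:ℝ)/m) - γ s‖ ≤ K * dist ((i:ℝ)/m) s := this
      _ ≤ K * (1/m) := by
          apply mul_le_mul_of_nonneg_left _ K.coe_nonneg
          rw [Real.dist_eq, abs_le]
          constructor
          · linarith [hs.2, hba]
          · linarith [hs.1]
    have h4 : (ℓ:ℝ) * ‖γ ((i:ℝ)/m) - γ s‖ ≤ ℓ * (K * (1/m)) :=
      mul_le_mul_of_nonneg_left h3 ℓ.coe_nonneg
    have : (ℓ:ℝ) * (K * (1/m)) = ℓ * K * (1/m) := by ring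
    linarith
  have hdn : ‖γ (((i:ℝ)+1)/m) - γ ((i:ℝ)/m)‖
      ≤ ∫ s in ((i:ℝ)/m)..(((i:ℝ)+1)/m), ‖deriv γ s‖ := norm_sub_le_integral_norm_deriv hγ hab
  have hInn : (0:ℝ) ≤ ∫ s in ((i:ℝ)/m)..(((i:ℝ)+1)/m), ‖gradient f (γ s)‖ * ‖deriv γ s‖ :=
    intervalIntegral.integral_nonneg hab (fun u _ => by positivity)
  have heq : (K:ℝ) * (1/m) * ((ℓ:ℝ) * K * (1/m)) = ℓ * K^2 / m^2 := by
    field_simp; try ring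
  by_cases hcase : ‖gradient f (γ ((i:ℝ)/m))‖ ≤ (ℓ:ℝ) * K * (1/m)
  · have hmul : ‖γ (((i:ℝ)+1)/m) - γ ((i:ℝ)/m)‖ * ‖gradient f (γ ((i:ℝ)/m))‖
        ≤ (K * (1/m)) * ((ℓ:ℝ) * K * (1/m)) :=
      mul_le_mul hLi hcase (norm_nonneg _) (by positivity)
    linarith [heq ▸ hmul]
  · push_neg at hcase
    have hc0 : (0:ℝ) < ‖gradient f (γ ((i:ℝ)/m))‖ - ℓ * K * (1/m) := by linarith
    have hmono : (‖gradient f (γ ((i:ℝ)/m))‖ - ℓ * K * (1/m))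
          * (∫ s in ((i:ℝ)/m)..(((i:ℝ)+1)/m), ‖deriv γ s‖)
        ≤ ∫ s in ((i:ℝ)/m)..(((i:ℝ)+1)/m), ‖gradient f (γ s)‖ * ‖deriv γ s‖ := by
      rw [← intervalIntegral.integral_const_mul]
      apply intervalIntegral.integral_mono_on hab (hndi.const_mul _)
        (agmon_integrable hgc hC hγ _ _)
      intro s hs
      exact mul_le_mul_of_nonneg_right (hVlow s hs) (norm_nonneg _)
    have h5 : (‖gradient f (γ ((i:ℝ)/m))‖ - ℓ * K * (1/m)) * ‖γ (((i:ℝ)+1)/m) - γ ((i:ℝ)/m)‖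
        ≤ (‖gradient f (γ ((i:ℝ)/m))‖ - ℓ * K * (1/m))
          * (∫ s in ((i:ℝ)/m)..(((i:ℝ)+1)/m), ‖deriv γ s‖) :=
      mul_le_mul_of_nonneg_left hdn hc0.le
    have h6 : (ℓ:ℝ) * K * (1/m) * ‖γ (((i:ℝ)+1)/m) - γ ((i:ℝ)/m)‖
        ≤ (ℓ:ℝ) * K * (1/m) * (K * (1/m)) :=
      mul_le_mul_of_nonneg_left hLi (by positivity)
    have heq2 : (ℓ:ℝ) * K * (1/m) * ((K:ℝ) * (1/m)) = ℓ * K^2 / m^2 := by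
      field_simp; try ring
    nlinarith [h5.trans hmono]

lemma sum_cost_le {ℓ : NNReal} (hl : LipschitzWith ℓ (gradient f)) {γ : ℝ → E} {K : NNReal}
    (hγ : LipschitzWith K γ) {m : ℕ} (hm : 0 < m) {δ : ℝ} :
    (∑ i ∈ Finset.range m, (2 * ‖γ (((i:ℝ)+1)/m) - γ ((i:ℝ)/m)‖ *
        (‖gradient f (γ ((i:ℝ)/m))‖ + ℓ * ‖γ (((i:ℝ)+1)/m) - γ ((i:ℝ)/m)‖) + δ))
      ≤ 2 * (∫ s in (0:ℝ)..1, ‖gradient f (γ s)‖ * ‖deriv γ s‖)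
        + 4 * ℓ * K^2 / m + m * δ := by
  have hmpos : (0:ℝ) < m := by exact_mod_cast hm
  have hLi : ∀ i : ℕ, ‖γ (((i:ℝ)+1)/m) - γ ((i:ℝ)/m)‖ ≤ K * (1/m) := by
    intro i
    have hba : ((i:ℝ)+1)/m - (i:ℝ)/m = 1/m := by field_simp; ring
    calc ‖γ (((i:ℝ)+1)/m) - γ ((i:ℝ)/m)‖ = dist (γ (((i:ℝ)+1)/m)) (γ ((i:ℝ)/m)) :=
          (dist_eq_norm _ _).symm
    _ ≤ K * dist (((i:ℝ)+1)/m) ((i:ℝ)/m) := hγ.dist_le_mul _ _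
    _ = K * (1/m) := by
        rw [Real.dist_eq, abs_of_nonneg (by linarith [hba, one_div_pos.2 hmpos]), hba]
  have hper : ∀ i ∈ Finset.range m,
      2 * ‖γ (((i:ℝ)+1)/m) - γ ((i:ℝ)/m)‖ *
        (‖gradient f (γ ((i:ℝ)/m))‖ + ℓ * ‖γ (((i:ℝ)+1)/m) - γ ((i:ℝ)/m)‖) + δ
      ≤ 2 * (∫ s in ((i:ℝ)/m)..(((i:ℝ)+1)/m), ‖gradient f (γ s)‖ * ‖deriv γ s‖)
        + 4 * ℓ * K^2 / m^2 + δ := by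
    intro i _
    have h1 := seg_est hgc hC hl hγ hm (i := i)
    have h2 := hLi i
    have hLnn : (0:ℝ) ≤ ‖γ (((i:ℝ)+1)/m) - γ ((i:ℝ)/m)‖ := norm_nonneg _
    have h3 : (ℓ:ℝ) * ‖γ (((i:ℝ)+1)/m) - γ ((i:ℝ)/m)‖^2 ≤ ℓ * (K * (1/m))^2 := by
      apply mul_le_mul_of_nonneg_left _ ℓ.coe_nonneg
      nlinarith
    have heq3 : (ℓ:ℝ) * ((K:ℝ) * (1/m))^2 = ℓ * K^2/m^2 := by field_simp; try ring
    have h3' : (ℓ:ℝ) * ‖γ (((i:ℝ)+1)/m) - γ ((i:ℝ)/m)‖^2 ≤ ℓ * K^2/m^2 := heq3 ▸ h3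
    have hexp : 2 * ‖γ (((i:ℝ)+1)/m) - γ ((i:ℝ)/m)‖ *
        (‖gradient f (γ ((i:ℝ)/m))‖ + ℓ * ‖γ (((i:ℝ)+1)/m) - γ ((i:ℝ)/m)‖) + δ
        = 2 * (‖γ (((i:ℝ)+1)/m) - γ ((i:ℝ)/m)‖ * ‖gradient f (γ ((i:ℝ)/m))‖)
          + 2 * ((ℓ:ℝ) * ‖γ (((i:ℝ)+1)/m) - γ ((i:ℝ)/m)‖^2) + δ := by ring
    rw [hexp]
    have hrhs : (2 * ∫ s in ((i:ℝ)/m)..(((i:ℝ)+1)/m), ‖gradient f (γ s)‖ * ‖deriv γ s‖)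
        + 4 * (ℓ:ℝ) * K^2 / m^2 + δ
        = 2 * ((∫ s in ((i:ℝ)/m)..(((i:ℝ)+1)/m), ‖gradient f (γ s)‖ * ‖deriv γ s‖)
            + (ℓ:ℝ) * K^2 / m^2) + 2 * ((ℓ:ℝ) * K^2 / m^2) + δ := by ring
    rw [hrhs]
    exact add_le_add (add_le_add (mul_le_mul_of_nonneg_left h1 (by norm_num))
      (mul_le_mul_of_nonneg_left h3' (by norm_num))) le_rfl
  calc (∑ i ∈ Finset.range m, (2 * ‖γ (((i:ℝ)+1)/m) - γ ((i:ℝ)/m)‖ *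
        (‖gradient f (γ ((i:ℝ)/m))‖ + ℓ * ‖γ (((i:ℝ)+1)/m) - γ ((i:ℝ)/m)‖) + δ))
      ≤ ∑ i ∈ Finset.range m,
        (2 * (∫ s in ((i:ℝ)/m)..(((i:ℝ)+1)/m), ‖gradient f (γ s)‖ * ‖deriv γ s‖)
          + 4 * ℓ * K^2 / m^2 + δ) := Finset.sum_le_sum hper
  _ = 2 * (∑ i ∈ Finset.range m,
        ∫ s in ((i:ℝ)/m)..(((i:ℝ)+1)/m), ‖gradient f (γ s)‖ * ‖deriv γ s‖)
        + m * (4 * ℓ * K^2 / m^2) + m * δ := by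
      rw [Finset.sum_add_distrib, Finset.sum_add_distrib, ← Finset.mul_sum]
      simp [Finset.sum_const, Finset.card_range, nsmul_eq_mul]
  _ = 2 * (∫ s in (0:ℝ)..1, ‖gradient f (γ s)‖ * ‖deriv γ s‖)
        + 4 * ℓ * K^2 / m + m * δ := by
      have hsum : (∑ i ∈ Finset.range m,
          ∫ s in ((i:ℝ)/m)..(((i:ℝ)+1)/m), ‖gradient f (γ s)‖ * ‖deriv γ s‖)
          = ∫ s in (0:ℝ)..1, ‖gradient f (γ s)‖ * ‖deriv γ s‖ := by
        have := intervalIntegral.sum_integral_adjacent_intervals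
          (f := fun s => ‖gradient f (γ s)‖ * ‖deriv γ s‖) (μ := volume)
          (a := fun k : ℕ => (k:ℝ)/m) (n := m)
          (fun k _ => agmon_integrable hgc hC hγ _ _)
        simp only [Nat.cast_add, Nat.cast_one, Nat.cast_zero, zero_div] at this
        rw [show ((m:ℝ))/m = (1:ℝ) by field_simp] at this
        exact this
      rw [hsum]
      have : (m:ℝ) * (4 * ℓ * K^2 / m^2) = 4 * ℓ * K^2 / m := by
        field_simp
      rw [this]

lemma dirB {ℓ : NNReal} (hl : LipschitzWith ℓ (gradient f)) {γ : ℝ → E} {K : NNReal}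
    (hγ : LipschitzWith K γ) {ε : ℝ} (hε : 0 < ε) :
    ∃ c, ach f (γ 0) (γ 1) c ∧
      c ≤ 2 * (∫ s in (0:ℝ)..1, ‖gradient f (γ s)‖ * ‖deriv γ s‖) + ε := by
  obtain ⟨m₀, hm₀⟩ := exists_nat_gt (8 * (ℓ:ℝ) * K^2 / ε)
  set m : ℕ := m₀ + 1 with hmdef
  have hm : 0 < m := Nat.succ_pos m₀
  have hmpos : (0:ℝ) < m := by exact_mod_cast hm
  have hmge : 8 * (ℓ:ℝ) * K^2 / ε < m := by
    have : (m₀:ℝ) ≤ m := by exact_mod_cast Nat.le_succ m₀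
    linarith
  have hhalf : 4 * (ℓ:ℝ) * K^2 / m ≤ ε / 2 := by
    rw [div_le_iff₀ hmpos]
    have h8 : 8 * (ℓ:ℝ) * K^2 ≤ ε * m := by
      rw [div_lt_iff₀ hε] at hmge
      nlinarith
    nlinarith
  set δ : ℝ := ε / (2 * m) with hδdef
  have hδ : 0 < δ := by positivity
  refine ⟨_, ach_chain hgc hC hl γ hm hδ, ?_⟩
  have hb := sum_cost_le hgc hC hl hγ hm (δ := δ)
  have hmδ : (m:ℝ) * δ = ε / 2 := by
    rw [hδdef]
    field_simp
  calc (∑ i ∈ Finset.range m, (2 * ‖γ (((i:ℝ)+1)/m) - γ ((i:ℝ)/m)‖ *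
        (‖gradient f (γ ((i:ℝ)/m))‖ + ℓ * ‖γ (((i:ℝ)+1)/m) - γ ((i:ℝ)/m)‖) + δ))
      ≤ 2 * (∫ s in (0:ℝ)..1, ‖gradient f (γ s)‖ * ‖deriv γ s‖)
        + 4 * ℓ * K^2 / m + m * δ := hb
  _ ≤ 2 * (∫ s in (0:ℝ)..1, ‖gradient f (γ s)‖ * ‖deriv γ s‖) + ε := by
      rw [hmδ]
      linarith
end WithF2

/-- the set of action values of paths from `x` to `y` in time `t`. -/
def PS (f : E → ℝ) (x y : E) (t : ℝ) : Set ℝ :=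
  { I : ℝ | ∃ γ : ℝ → E, (∃ K, LipschitzWith K γ) ∧ γ 0 = x ∧ γ t = y ∧
      I = ∫ s in (0:ℝ)..t, (‖deriv γ s‖^2 + ‖gradient f (γ s)‖^2) }

/-- the set of Agmon-integral values of paths from `x` to `y` in time 1. -/
def AS (f : E → ℝ) (x y : E) : Set ℝ :=
  { I : ℝ | ∃ γ : ℝ → E, (∃ K, LipschitzWith K γ) ∧ γ 0 = x ∧ γ 1 = y ∧
      I = ∫ s in (0:ℝ)..1, ‖gradient f (γ s)‖ * ‖deriv γ s‖ }

lemma line_path_props (x y : E) {t : ℝ} (ht : t ≠ 0) :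
    ∃ γ : ℝ → E, (∃ K, LipschitzWith K γ) ∧ γ 0 = x ∧ γ t = y := by
  refine ⟨fun s => x + s • (t⁻¹ • (y - x)), ⟨_, lipschitzWith_line x _⟩, by simp, ?_⟩
  show x + t • (t⁻¹ • (y - x)) = y
  rw [smul_smul, mul_inv_cancel₀ ht, one_smul]
  abel

lemma PS_nonempty (f : E → ℝ) (x y : E) {t : ℝ} (ht : t ≠ 0) : (PS f x y t).Nonempty := by
  obtain ⟨γ, hK, h0, hte⟩ := line_path_props x y ht
  exact ⟨_, γ, hK, h0, hte, rfl⟩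

lemma AS_nonempty (f : E → ℝ) (x y : E) : (AS f x y).Nonempty := by
  obtain ⟨γ, hK, h0, hte⟩ := line_path_props x y (one_ne_zero (α := ℝ))
  exact ⟨_, γ, hK, h0, hte, rfl⟩

lemma PS_nonneg (f : E → ℝ) (x y : E) {t : ℝ} (ht : 0 ≤ t) {I : ℝ} (hI : I ∈ PS f x y t) :
    0 ≤ I := by
  obtain ⟨γ, _, _, _, rfl⟩ := hI
  exact intervalIntegral.integral_nonneg ht (fun u _ => by positivity)

lemma AS_nonneg (f : E → ℝ) (x y : E) {I : ℝ} (hI : I ∈ AS f x y) : 0 ≤ I := by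
  obtain ⟨γ, _, _, _, rfl⟩ := hI
  exact intervalIntegral.integral_nonneg zero_le_one (fun u _ => by positivity)

lemma PS_subset {f : E → ℝ} {C : ℝ} (hgc : Continuous (gradient f))
    (hC : ∀ z, ‖gradient f z‖ ≤ C) {x y : E} (hy : gradient f y = 0)
    {t₁ t₂ : ℝ} (h1 : 0 < t₁) (h12 : t₁ ≤ t₂) : PS f x y t₁ ⊆ PS f x y t₂ := by
  rintro I ⟨γ, ⟨K, hK⟩, h0, hte, rfl⟩
  set η : ℝ → E := fun s => γ (min s t₁) with hη
  have hlip : LipschitzWith (K * 1) η := hK.comp (LipschitzWith.id.min_const t₁)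
  have hne : ∀ᵐ s : ℝ, s ≠ t₁ := by
    rw [ae_iff]
    have : {s : ℝ | ¬ s ≠ t₁} = {t₁} := by ext s; simp
    rw [this]
    exact measure_singleton t₁
  refine ⟨η, ⟨K * 1, hlip⟩, ?_, ?_, ?_⟩
  · show γ (min 0 t₁) = x
    rw [min_eq_left h1.le, h0]
  · show γ (min t₂ t₁) = y
    rw [min_eq_right h12, hte]
  · have hsplit : (∫ s in (0:ℝ)..t₂, (‖deriv η s‖^2 + ‖gradient f (η s)‖^2))
        = (∫ s in (0:ℝ)..t₁, (‖deriv η s‖^2 + ‖gradient f (η s)‖^2))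
          + ∫ s in t₁..t₂, (‖deriv η s‖^2 + ‖gradient f (η s)‖^2) := by
      rw [intervalIntegral.integral_add_adjacent_intervals
        (action_integrable hgc hC hlip 0 t₁) (action_integrable hgc hC hlip t₁ t₂)]
    have he1 : (∫ s in (0:ℝ)..t₁, (‖deriv η s‖^2 + ‖gradient f (η s)‖^2))
        = ∫ s in (0:ℝ)..t₁, (‖deriv γ s‖^2 + ‖gradient f (γ s)‖^2) := by
      apply intervalIntegral.integral_congr_ae
      filter_upwards [hne] with s hs hmem
      rw [Set.uIoc_of_le h1.le] at hmem
      have hslt : s < t₁ := lt_of_le_of_ne hmem.2 hs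
      have hev : η =ᶠ[nhds s] γ := by
        filter_upwards [Iio_mem_nhds hslt] with u hu
        show γ (min u t₁) = γ u
        rw [min_eq_left (le_of_lt hu)]
      rw [hev.deriv_eq, hev.self_of_nhds]
    have he2 : (∫ s in t₁..t₂, (‖deriv η s‖^2 + ‖gradient f (η s)‖^2)) = 0 := by
      have : (∫ s in t₁..t₂, (‖deriv η s‖^2 + ‖gradient f (η s)‖^2))
          = ∫ s in t₁..t₂, (0:ℝ) := by
        apply intervalIntegral.integral_congr_ae
        filter_upwards [hne] with s hs hmem
        rw [Set.uIoc_of_le h12] at hmem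
        have hsgt : t₁ < s := hmem.1
        have hev : η =ᶠ[nhds s] (fun _ => y) := by
          filter_upwards [Ioi_mem_nhds hsgt] with u hu
          show γ (min u t₁) = y
          rw [min_eq_right (le_of_lt hu), hte]
        rw [hev.deriv_eq, hev.self_of_nhds, deriv_const]
        simp [hy]
      rw [this, intervalIntegral.integral_zero]
    rw [hsplit, he1, he2, add_zero]

end Stmt6Aux

open Stmt6Aux Set Filter

/-- The finite-time action `ρ(x,y,t)` associated with the potential `|∇f|²`. -/
noncomputable def rho6 (n : ℕ) (f : EuclideanSpace ℝ (Fin n) → ℝ)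
    (x y : EuclideanSpace ℝ (Fin n)) (t : ℝ) : ℝ :=
  (1/4) * sInf { I : ℝ | ∃ γ : ℝ → EuclideanSpace ℝ (Fin n),
      (∃ K, LipschitzWith K γ) ∧ γ 0 = x ∧ γ t = y ∧
      I = ∫ s in (0:ℝ)..t, (‖deriv γ s‖^2 + ‖gradient f (γ s)‖^2) }

/-- The Agmon distance at the bottom energy of the potential `|∇f|²/4`. -/
noncomputable def dA6 (n : ℕ) (f : EuclideanSpace ℝ (Fin n) → ℝ)
    (x y : EuclideanSpace ℝ (Fin n)) : ℝ :=
  (1/2) * sInf { I : ℝ | ∃ γ : ℝ → EuclideanSpace ℝ (Fin n),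
      (∃ K, LipschitzWith K γ) ∧ γ 0 = x ∧ γ 1 = y ∧
      I = ∫ s in (0:ℝ)..1, ‖gradient f (γ s)‖ * ‖deriv γ s‖ }

/-- Section A.3 (Euclidean form): `d_A(x,y) = inf_{t>0} ρ(x,y,t)`; if moreover
`∇f(y) = 0` then `t ↦ ρ(x,y,t)` is nonincreasing on `(0,∞)` and
`ρ(x,y,t) → d_A(x,y)` as `t → ∞`. -/
theorem stmt6 (n : ℕ) (f : EuclideanSpace ℝ (Fin n) → ℝ)
    (hf : ContDiff ℝ 1 f) (hbdd : ∃ C, ∀ z, ‖gradient f z‖ ≤ C)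
    (hlip : ∃ K, LipschitzWith K (gradient f))
    (x y : EuclideanSpace ℝ (Fin n)) :
    dA6 n f x y = sInf (rho6 n f x y '' Set.Ioi 0) ∧
    (gradient f y = 0 →
      AntitoneOn (rho6 n f x y) (Set.Ioi 0) ∧
      Filter.Tendsto (rho6 n f x y) Filter.atTop (nhds (dA6 n f x y))) := by
  obtain ⟨C, hC⟩ := hbdd
  obtain ⟨ℓ, hl⟩ := hlip
  have hgc : Continuous (gradient f) := hl.continuous
  have hrho : ∀ t : ℝ, rho6 n f x y t = (1/4) * sInf (PS f x y t) := fun _ => rfl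
  have hdA : dA6 n f x y = (1/2) * sInf (AS f x y) := rfl
  have hPSbdd : ∀ t : ℝ, 0 ≤ t → BddBelow (PS f x y t) :=
    fun t ht => ⟨0, fun I hI => PS_nonneg f x y ht hI⟩
  have hASbdd : BddBelow (AS f x y) := ⟨0, fun I hI => AS_nonneg f x y hI⟩
  -- Direction A
  have hA : ∀ t : ℝ, 0 < t → dA6 n f x y ≤ rho6 n f x y t := by
    intro t ht
    rw [hdA, hrho]
    have h4 : 2 * sInf (AS f x y) ≤ sInf (PS f x y t) := by
      apply le_csInf (PS_nonempty f x y ht.ne')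
      rintro I ⟨γ, ⟨K, hK⟩, h0, hte, rfl⟩
      obtain ⟨σ, hσlip, hσ0, hσ1, hle⟩ := dirA_exists hgc hC ht hK
      have hmem : (∫ s in (0:ℝ)..1, ‖gradient f (σ s)‖ * ‖deriv σ s‖) ∈ AS f x y :=
        ⟨σ, hσlip, by rw [hσ0, h0], by rw [hσ1, hte], rfl⟩
      have h5 := csInf_le hASbdd hmem
      linarith
    linarith
  -- rho6 is nonneg on Ioi 0
  have hrho_nn : ∀ t : ℝ, 0 < t → 0 ≤ rho6 n f x y t := by
    intro t ht
    rw [hrho]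
    have := le_csInf (PS_nonempty f x y ht.ne') (fun I hI => PS_nonneg f x y ht.le hI)
    linarith
  have himg_ne : (rho6 n f x y '' Set.Ioi 0).Nonempty := ⟨rho6 n f x y 1, 1, by norm_num, rfl⟩
  have himg_bdd : BddBelow (rho6 n f x y '' Set.Ioi 0) := by
    refine ⟨0, ?_⟩
    rintro r ⟨t, ht, rfl⟩
    exact hrho_nn t ht
  -- achievability bounds the infimum
  have hach : ∀ c : ℝ, ach f x y c → sInf (rho6 n f x y '' Set.Ioi 0) ≤ (1/4) * c := by
    rintro c ⟨t, ht, γ, hKex, h0, hte, hcost⟩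
    have hmem : (∫ s in (0:ℝ)..t, (‖deriv γ s‖^2 + ‖gradient f (γ s)‖^2)) ∈ PS f x y t :=
      ⟨γ, hKex, h0, hte, rfl⟩
    have h1 := csInf_le (hPSbdd t ht.le) hmem
    have h3 : sInf (rho6 n f x y '' Set.Ioi 0) ≤ rho6 n f x y t :=
      csInf_le himg_bdd ⟨t, ht, rfl⟩
    rw [hrho] at h3
    linarith
  -- Direction B
  have hB : sInf (rho6 n f x y '' Set.Ioi 0) ≤ dA6 n f x y := by
    rw [hdA]
    have h6 : 2 * sInf (rho6 n f x y '' Set.Ioi 0) ≤ sInf (AS f x y) := by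
      apply le_csInf (AS_nonempty f x y)
      rintro I ⟨γ, ⟨K, hK⟩, h0, h1e, rfl⟩
      by_contra hcon
      push_neg at hcon
      set I0 : ℝ := ∫ s in (0:ℝ)..1, ‖gradient f (γ s)‖ * ‖deriv γ s‖ with hI0
      set ε : ℝ := (2 * sInf (rho6 n f x y '' Set.Ioi 0) - I0) / 2 with hε
      have hεpos : 0 < ε := by rw [hε]; linarith
      obtain ⟨c, hachc, hcle⟩ := dirB hgc hC hl hK hεpos
      have h7 := hach c (by rwa [h0, h1e] at hachc)
      rw [hε] at hcle
      linarith
    linarith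
  have heq : dA6 n f x y = sInf (rho6 n f x y '' Set.Ioi 0) := by
    apply le_antisymm
    · apply le_csInf himg_ne
      rintro r ⟨t, ht, rfl⟩
      exact hA t ht
    · exact hB
  refine ⟨heq, ?_⟩
  intro hy
  have hanti : AntitoneOn (rho6 n f x y) (Set.Ioi 0) := by
    intro t₁ h1 t₂ h2 h12
    rw [hrho, hrho]
    have hsub := PS_subset (x := x) hgc hC hy (mem_Ioi.1 h1) h12
    have := csInf_le_csInf (hPSbdd t₂ (le_of_lt (lt_of_lt_of_le h1 h12)))
      (PS_nonempty f x y (ne_of_gt (mem_Ioi.1 h1))) hsub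
    linarith
  refine ⟨hanti, ?_⟩
  set g : ℝ → ℝ := fun t => rho6 n f x y (max t 1) with hg
  have hmax : ∀ t : ℝ, max t 1 ∈ Set.Ioi (0:ℝ) :=
    fun t => mem_Ioi.2 (lt_of_lt_of_le one_pos (le_max_right t 1))
  have hganti : Antitone g := by
    intro a b hab
    exact hanti (hmax a) (hmax b) (max_le_max hab le_rfl)
  have hgbdd : BddBelow (Set.range g) := by
    refine ⟨dA6 n f x y, ?_⟩
    rintro r ⟨t, rfl⟩
    exact hA _ (mem_Ioi.1 (hmax t))
  have hlim := tendsto_atTop_ciInf hganti hgbdd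
  have hiInf : (⨅ t : ℝ, g t) = dA6 n f x y := by
    apply le_antisymm
    · rw [heq]
      apply le_csInf himg_ne
      rintro r ⟨t, ht, rfl⟩
      calc (⨅ u : ℝ, g u) ≤ g t := ciInf_le hgbdd t
      _ ≤ rho6 n f x y t := hanti (mem_Ioi.2 ht) (hmax t) (le_max_left t 1)
    · exact le_ciInf fun t => hA _ (mem_Ioi.1 (hmax t))
  rw [← hiInf]
  apply hlim.congr'
  filter_upwards [eventually_ge_atTop (1:ℝ)] with t ht
  rw [hg]
  simp only [max_eq_left ht]
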